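/- Let ε > 0 and let S ∈ O(d)^{⊗n} satisfy d_F(S,Z) ≤ ε√(nd). Then the smallest singular value of Z^T S ∈ ℝ^{d×d} satisfies σ_min(Z^T S) ≥ n(1 − ε²d/2). -/
import Mathlib


open MeasureTheory Matrix Filter

namespace GOPP

/-- Frobenius norm of a real matrix. -/
noncomputable def frob {α β : Type*} [Fintype α] [Fintype β] (X : Matrix α β ℝ) : ℝ :=
  Real.sqrt (∑ i, ∑ j, X i j ^ 2)

/-- Euclidean norm of a vector. -/
noncomputable def vnorm {β : Type*} [Fintype β] (v : β → ℝ) : ℝ :=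
  Real.sqrt (∑ j, v j ^ 2)

/-- Operator (spectral) norm: the supremum of ‖Xu‖ over unit vectors u. -/
noncomputable def opNorm {α β : Type*} [Fintype α] [Fintype β] (X : Matrix α β ℝ) : ℝ :=
  sSup {r : ℝ | ∃ u : β → ℝ, vnorm u = 1 ∧ r = vnorm (X.mulVec u)}

/-- Smallest singular value: the infimum of ‖uᵀX‖ over unit vectors u (for a d×m matrix
with d ≤ m this is the d-th largest singular value; for square matrices it is σ_min). -/
noncomputable def sigmaMin {α β : Type*} [Fintype α] [Fintype β] (X : Matrix α β ℝ) : ℝ :=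
  sInf {r : ℝ | ∃ u : α → ℝ, vnorm u = 1 ∧ r = vnorm (Matrix.vecMul u X)}

/-- Condition number κ = σ_max/σ_min. -/
noncomputable def kappa {d m : ℕ} (A : Matrix (Fin d) (Fin m) ℝ) : ℝ :=
  opNorm A / sigmaMin A

/-- Q is an orthogonal matrix. -/
def IsOrth {d : ℕ} (Q : Matrix (Fin d) (Fin d) ℝ) : Prop :=
  Qᵀ * Q = 1 ∧ Q * Qᵀ = 1

/-- Nuclear norm, via the dual characterization ‖M‖_* = max_{Q ∈ O(d)} ⟨Q, M⟩. -/
noncomputable def nuclearNorm {d : ℕ} (M : Matrix (Fin d) (Fin d) ℝ) : ℝ :=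
  sSup {r : ℝ | ∃ Q : Matrix (Fin d) (Fin d) ℝ, IsOrth Q ∧ r = Matrix.trace (Qᵀ * M)}

/-- The i-th d×k block of an (nd)×k block matrix. -/
def blk {n d k : ℕ} (S : Matrix (Fin n × Fin d) (Fin k) ℝ) (i : Fin n) :
    Matrix (Fin d) (Fin k) ℝ :=
  Matrix.of fun a b => S (i, a) b

/-- The i-th diagonal d×d block of an (nd)×(nd) matrix. -/
def dblk {n d : ℕ} (G : Matrix (Fin n × Fin d) (Fin n × Fin d) ℝ) (i : Fin n) :
    Matrix (Fin d) (Fin d) ℝ :=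
  Matrix.of fun a b => G (i, a) (i, b)

/-- S ∈ O(d)^{⊗n}: each of the n d×d blocks of S is orthogonal. -/
def OrthBlocks {n d : ℕ} (S : Matrix (Fin n × Fin d) (Fin d) ℝ) : Prop :=
  ∀ i, IsOrth (blk S i)

/-- Z ∈ ℝ^{nd×d}: the vertical stack of n copies of I_d. -/
def ZStack (n d : ℕ) : Matrix (Fin n × Fin d) (Fin d) ℝ :=
  Matrix.of fun p j => if p.2 = j then 1 else 0

/-- Vertical stack of n given d×k matrices. -/
def stack {n d k : ℕ} (B : Fin n → Matrix (Fin d) (Fin k) ℝ) :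
    Matrix (Fin n × Fin d) (Fin k) ℝ :=
  Matrix.of fun p b => B p.1 p.2 b

/-- d_F(X,Y) = min_{Q ∈ O(d)} ‖X − YQ‖_F. -/
noncomputable def dF {n d : ℕ} (X Y : Matrix (Fin n × Fin d) (Fin d) ℝ) : ℝ :=
  sInf {r : ℝ | ∃ Q, IsOrth Q ∧ r = frob (X - Y * Q)}

/-- R is a polar factor P(X) of X: an orthogonal global minimizer of ‖X − Q‖_F over O(d). -/
def IsPolar {d : ℕ} (X R : Matrix (Fin d) (Fin d) ℝ) : Prop :=
  IsOrth R ∧ ∀ Q : Matrix (Fin d) (Fin d) ℝ, IsOrth Q → frob (X - R) ≤ frob (X - Q)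

/-- S = P_n(X): blockwise polar factor. -/
def IsPolarBlocks {n d : ℕ} (X S : Matrix (Fin n × Fin d) (Fin d) ℝ) : Prop :=
  ∀ i, IsPolar (blk X i) (blk S i)

/-- U collects (an orthonormal basis of the span of) the top d left singular vectors of D:
U has orthonormal columns and maximizes the Ky Fan quantity trace(Uᵀ(DDᵀ)U). -/
def IsTopSingVecs {N : Type*} [Fintype N] {d m : ℕ} (D : Matrix N (Fin m) ℝ)
    (U : Matrix N (Fin d) ℝ) : Prop :=
  Uᵀ * U = 1 ∧ ∀ Q : Matrix N (Fin d) ℝ, Qᵀ * Q = 1 →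
    Matrix.trace (Qᵀ * (D * Dᵀ) * Q) ≤ Matrix.trace (Uᵀ * (D * Dᵀ) * U)

/-- (U, S, V) is a top-d singular triple of D: orthonormal U, V, diagonal nonnegative S,
DV = US, DᵀU = VS, and U spans a top-d left singular subspace. -/
def IsSVDTriple {N : Type*} [Fintype N] {d m : ℕ} (D : Matrix N (Fin m) ℝ)
    (U : Matrix N (Fin d) ℝ) (S : Matrix (Fin d) (Fin d) ℝ)
    (V : Matrix (Fin m) (Fin d) ℝ) : Prop :=
  Vᵀ * V = 1 ∧ (∀ a b, a ≠ b → S a b = 0) ∧ (∀ a, 0 ≤ S a a) ∧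
    D * V = U * S ∧ Dᵀ * U = V * S ∧ IsTopSingVecs D U

/-- The generalized power method sequence with spectral initialization, run on the data
matrix D (so with C = DDᵀ): S⁰ = P_n(U) for top singular vectors U of D, and
S^{t+1} = P_n(C Sᵗ). -/
def IsGPM {n d m : ℕ} (D : Matrix (Fin n × Fin d) (Fin m) ℝ)
    (S : ℕ → Matrix (Fin n × Fin d) (Fin d) ℝ) : Prop :=
  (∃ U, IsTopSingVecs D U ∧ IsPolarBlocks U (S 0)) ∧
    ∀ t, IsPolarBlocks (D * Dᵀ * S t) (S (t + 1))

/-- W^(i): W with its i-th block row replaced by 0. -/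
def mask {n d m : ℕ} (W : Matrix (Fin n × Fin d) (Fin m) ℝ) (i : Fin n) :
    Matrix (Fin n × Fin d) (Fin m) ℝ :=
  Matrix.of fun p b => if p.1 = i then 0 else W p b

/-- The noise matrix Δ = WAᵀZᵀ + ZAWᵀ + σWWᵀ. -/
noncomputable def delta {n d m : ℕ} (A : Matrix (Fin d) (Fin m) ℝ)
    (W : Matrix (Fin n × Fin d) (Fin m) ℝ) (σ : ℝ) :
    Matrix (Fin n × Fin d) (Fin n × Fin d) ℝ :=
  W * Aᵀ * (ZStack n d)ᵀ + ZStack n d * A * Wᵀ + σ • (W * Wᵀ)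

/-- The i-th block column Δ_i = WAᵀ + ZAW_iᵀ + σWW_iᵀ of Δ. -/
noncomputable def deltaCol {n d m : ℕ} (A : Matrix (Fin d) (Fin m) ℝ)
    (W : Matrix (Fin n × Fin d) (Fin m) ℝ) (σ : ℝ) (i : Fin n) :
    Matrix (Fin n × Fin d) (Fin d) ℝ :=
  W * Aᵀ + ZStack n d * A * (blk W i)ᵀ + σ • (W * (blk W i)ᵀ)

/-- The operator L S = C S/(n‖A‖²) with C = ZAAᵀZᵀ + σΔ. -/
noncomputable def Lop {n d m : ℕ} (A : Matrix (Fin d) (Fin m) ℝ)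
    (W : Matrix (Fin n × Fin d) (Fin m) ℝ) (σ : ℝ)
    (S : Matrix (Fin n × Fin d) (Fin d) ℝ) : Matrix (Fin n × Fin d) (Fin d) ℝ :=
  ((n : ℝ) * opNorm A ^ 2)⁻¹ •
    ((ZStack n d * A * Aᵀ * (ZStack n d)ᵀ + σ • delta A W σ) * S)

/-- √(nd) + √m + √(2γ n log n). -/
noncomputable def bnd1 (n d m : ℕ) (γ : ℝ) : ℝ :=
  Real.sqrt ((n : ℝ) * d) + Real.sqrt (m : ℝ) + Real.sqrt (2 * γ * n * Real.log n)

/-- √(nd) + √m + √(2γ log n). -/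
noncomputable def bnd2 (n d m : ℕ) (γ : ℝ) : ℝ :=
  Real.sqrt ((n : ℝ) * d) + Real.sqrt (m : ℝ) + Real.sqrt (2 * γ * Real.log n)

/-- The basin of attraction N_ε. -/
def memNeps {n d : ℕ} (ε : ℝ) (S : Matrix (Fin n × Fin d) (Fin d) ℝ) : Prop :=
  OrthBlocks S ∧ dF S (ZStack n d) ≤ ε * Real.sqrt ((n : ℝ) * d)

/-- The basin of attraction N_{ξ,∞}. -/
def memNxi {n d m : ℕ} (W : Matrix (Fin n × Fin d) (Fin m) ℝ) (γ ξ : ℝ)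
    (S : Matrix (Fin n × Fin d) (Fin d) ℝ) : Prop :=
  OrthBlocks S ∧ ∀ i, frob (blk W i * Wᵀ * S) ≤ ξ * Real.sqrt (d : ℝ) * bnd1 n d m γ ^ 2

/-- The distribution of a matrix with i.i.d. standard Gaussian N(0,1) entries. -/
noncomputable def stdGaussian (ι κ : Type*) [Fintype ι] [Fintype κ] :
    Measure (ι → κ → ℝ) :=
  Measure.pi fun _ : ι => Measure.pi fun _ : κ => ProbabilityTheory.gaussianReal 0 1

section Aux

lemma vnorm_sq' {β : Type*} [Fintype β] (v : β → ℝ) : vnorm v ^ 2 = ∑ j, v j ^ 2 :=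
  Real.sq_sqrt (Finset.sum_nonneg fun _ _ => sq_nonneg _)

lemma frob_nonneg' {α β : Type*} [Fintype α] [Fintype β] (X : Matrix α β ℝ) : 0 ≤ frob X :=
  Real.sqrt_nonneg _

lemma frob_sq' {α β : Type*} [Fintype α] [Fintype β] (X : Matrix α β ℝ) :
    frob X ^ 2 = ∑ i, ∑ j, X i j ^ 2 :=
  Real.sq_sqrt (Finset.sum_nonneg fun _ _ => Finset.sum_nonneg fun _ _ => sq_nonneg _)

lemma sum_sq_vecMul_transpose {d : ℕ} (Q : Matrix (Fin d) (Fin d) ℝ) (hQ : IsOrth Q)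
    (v : Fin d → ℝ) : ∑ j, (Matrix.vecMul v Qᵀ j) ^ 2 = ∑ j, v j ^ 2 := by
  have h : ∀ w : Fin d → ℝ, ∑ j, w j ^ 2 = w ⬝ᵥ w := by
    intro w; simp [dotProduct, sq]
  rw [h, h]
  rw [Matrix.vecMul_transpose, Matrix.dotProduct_mulVec, ← Matrix.vecMul_transpose,
      Matrix.vecMul_vecMul, hQ.1, Matrix.vecMul_one]

lemma vnorm_vecMul_transpose {d : ℕ} (Q : Matrix (Fin d) (Fin d) ℝ) (hQ : IsOrth Q)
    (v : Fin d → ℝ) : vnorm (Matrix.vecMul v Qᵀ) = vnorm v := by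
  unfold vnorm; rw [sum_sq_vecMul_transpose Q hQ]

lemma frob_mul_transpose_orth {α : Type*} [Fintype α] {d : ℕ} (X : Matrix α (Fin d) ℝ)
    (Q : Matrix (Fin d) (Fin d) ℝ) (hQ : IsOrth Q) : frob (X * Qᵀ) = frob X := by
  unfold frob
  congr 1
  refine Finset.sum_congr rfl fun p _ => ?_
  have h : ∀ j, (X * Qᵀ) p j = Matrix.vecMul (fun b => X p b) Qᵀ j := by
    intro j; simp [Matrix.mul_apply, Matrix.vecMul, dotProduct]
  simp_rw [h]
  exact sum_sq_vecMul_transpose Q hQ _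

lemma blk_mul {n d k : ℕ} (X : Matrix (Fin n × Fin d) (Fin d) ℝ)
    (B : Matrix (Fin d) (Fin k) ℝ) (i : Fin n) : blk (X * B) i = blk X i * B := by
  ext a b; simp [blk, Matrix.mul_apply]

lemma isOrth_mul {d : ℕ} {A B : Matrix (Fin d) (Fin d) ℝ} (hA : IsOrth A) (hB : IsOrth B) :
    IsOrth (A * B) := by
  constructor
  · rw [Matrix.transpose_mul, Matrix.mul_assoc, ← Matrix.mul_assoc Aᵀ, hA.1, Matrix.one_mul, hB.1]
  · rw [Matrix.transpose_mul, Matrix.mul_assoc, ← Matrix.mul_assoc B, hB.2, Matrix.one_mul, hA.2]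

lemma isOrth_transpose {d : ℕ} {Q : Matrix (Fin d) (Fin d) ℝ} (hQ : IsOrth Q) : IsOrth Qᵀ := by
  refine ⟨?_, ?_⟩ <;> simp [Matrix.transpose_transpose, hQ.1, hQ.2]

lemma orthBlocks_ZStack (n d : ℕ) : OrthBlocks (ZStack n d) := by
  intro i
  have h : blk (ZStack n d) i = 1 := by
    ext a b; simp [blk, ZStack, Matrix.one_apply]
  rw [h]; exact ⟨by simp, by simp⟩

lemma transpose_mul_self_of_orthBlocks {n d : ℕ} (X : Matrix (Fin n × Fin d) (Fin d) ℝ)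
    (hX : OrthBlocks X) : Xᵀ * X = (n : ℝ) • (1 : Matrix (Fin d) (Fin d) ℝ) := by
  ext a b
  simp only [Matrix.mul_apply, Matrix.transpose_apply]
  rw [Fintype.sum_prod_type]
  have h : ∀ i : Fin n, ∑ c, X (i, c) a * X (i, c) b = (1 : Matrix (Fin d) (Fin d) ℝ) a b := by
    intro i
    have := congrFun (congrFun (hX i).1 a) b
    simpa [Matrix.mul_apply, blk] using this
  rw [Finset.sum_congr rfl fun i _ => h i]
  simp [Matrix.smul_apply, Finset.sum_const, mul_comm]

lemma key_ineq {n d : ℕ} (S : Matrix (Fin n × Fin d) (Fin d) ℝ) (hS : OrthBlocks S)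
    (Q : Matrix (Fin d) (Fin d) ℝ) (hQ : IsOrth Q) (u : Fin d → ℝ) (hu : vnorm u = 1) :
    (n : ℝ) - frob (S - ZStack n d * Q) ^ 2 / 2
      ≤ vnorm (Matrix.vecMul u ((ZStack n d)ᵀ * S)) := by
  set Z := ZStack n d with hZdef
  set T := S * Qᵀ with hTdef
  have husq : ∑ j, u j ^ 2 = 1 := by rw [← vnorm_sq', hu]; norm_num
  have huu : u ⬝ᵥ u = 1 := by
    rw [← husq]; simp [dotProduct, sq]
  have hT : OrthBlocks T := fun i => by
    rw [hTdef, blk_mul]; exact isOrth_mul (hS i) (isOrth_transpose hQ)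
  have hTT : Tᵀ * T = (n : ℝ) • 1 := transpose_mul_self_of_orthBlocks T hT
  have hZZ : Zᵀ * Z = (n : ℝ) • 1 := transpose_mul_self_of_orthBlocks Z (orthBlocks_ZStack n d)
  have dself : ∀ X : Matrix (Fin n × Fin d) (Fin d) ℝ, Xᵀ * X = (n : ℝ) • 1 →
      X.mulVec u ⬝ᵥ X.mulVec u = (n : ℝ) := by
    intro X hX
    rw [Matrix.dotProduct_mulVec, ← Matrix.vecMul_transpose, Matrix.vecMul_vecMul, hX]
    have h1 : Matrix.vecMul u ((n : ℝ) • (1 : Matrix (Fin d) (Fin d) ℝ)) = fun j => n * u j := by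
      ext j; simp [Matrix.vecMul, dotProduct, Matrix.smul_apply, Matrix.one_apply, mul_comm]
    rw [h1]
    have : (fun j => (n : ℝ) * u j) ⬝ᵥ u = (n : ℝ) * (u ⬝ᵥ u) := by
      simp [dotProduct, Finset.mul_sum, mul_assoc]
    rw [this, huu, mul_one]
  have cross : Z.mulVec u ⬝ᵥ T.mulVec u = Matrix.vecMul u (Zᵀ * T) ⬝ᵥ u := by
    rw [Matrix.dotProduct_mulVec, ← Matrix.vecMul_transpose, Matrix.vecMul_vecMul]
  have hw : ((T - Z).mulVec u) ⬝ᵥ ((T - Z).mulVec u)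
      = 2 * (n : ℝ) - 2 * (Matrix.vecMul u (Zᵀ * T) ⬝ᵥ u) := by
    rw [Matrix.sub_mulVec, sub_dotProduct, dotProduct_sub, dotProduct_sub,
        dself T hTT, dself Z hZZ, dotProduct_comm (T.mulVec u) (Z.mulVec u), cross]
    ring
  have hwfrob : ((T - Z).mulVec u) ⬝ᵥ ((T - Z).mulVec u) ≤ frob (T - Z) ^ 2 := by
    have hrow : ∀ p : Fin n × Fin d, ((T - Z).mulVec u p) ^ 2 ≤ ∑ j, (T - Z) p j ^ 2 := by
      intro p
      have h := Finset.sum_mul_sq_le_sq_mul_sq Finset.univ (fun j => (T - Z) p j) u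
      rw [husq, mul_one] at h
      simpa [Matrix.mulVec, dotProduct] using h
    have : ((T - Z).mulVec u) ⬝ᵥ ((T - Z).mulVec u) = ∑ p, ((T - Z).mulVec u p) ^ 2 := by
      simp [dotProduct, sq]
    rw [this, frob_sq']
    exact Finset.sum_le_sum fun p _ => hrow p
  have hfrob_eq : frob (T - Z) = frob (S - Z * Q) := by
    have hTZ : T - Z = (S - Z * Q) * Qᵀ := by
      rw [Matrix.sub_mul, Matrix.mul_assoc, hQ.2, Matrix.mul_one]
    rw [hTZ, frob_mul_transpose_orth _ Q hQ]
  have hcs : Matrix.vecMul u (Zᵀ * T) ⬝ᵥ u ≤ vnorm (Matrix.vecMul u (Zᵀ * T)) := by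
    have h := Real.sum_mul_le_sqrt_mul_sqrt Finset.univ (Matrix.vecMul u (Zᵀ * T)) u
    rw [husq, Real.sqrt_one, mul_one] at h
    exact h
  have hvn : vnorm (Matrix.vecMul u (Zᵀ * T)) = vnorm (Matrix.vecMul u (Zᵀ * S)) := by
    have h1 : Zᵀ * T = (Zᵀ * S) * Qᵀ := by rw [hTdef, Matrix.mul_assoc]
    rw [h1, ← Matrix.vecMul_vecMul, vnorm_vecMul_transpose Q hQ]
  have := hcs.trans_eq hvn
  rw [hfrob_eq] at hwfrob; rw [hfrob_eq] at *
  linarith [hw ▸ hwfrob]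

lemma isOrth_one {d : ℕ} : IsOrth (1 : Matrix (Fin d) (Fin d) ℝ) := ⟨by simp, by simp⟩

end Aux

/-- if S ∈ O(d)^{⊗n} satisfies d_F(S,Z) ≤ ε√(nd) then
σ_min(ZᵀS) ≥ n(1 − ε²d/2). -/
theorem sigmaMin_ZtS_lower_bound (n d : ℕ) (hn : 1 ≤ n) (hd : 1 ≤ d)
    (ε : ℝ) (hε : 0 < ε)
    (S : Matrix (Fin n × Fin d) (Fin d) ℝ) (hS : OrthBlocks S)
    (hdist : dF S (ZStack n d) ≤ ε * Real.sqrt ((n : ℝ) * d)) :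
    (n : ℝ) * (1 - ε ^ 2 * d / 2) ≤ sigmaMin ((ZStack n d)ᵀ * S) := by
  set σ := sigmaMin ((ZStack n d)ᵀ * S) with hσdef
  have hd0 : 0 < d := hd
  have hn0 : (1 : ℝ) ≤ (n : ℝ) := by exact_mod_cast hn
  -- a unit vector exists
  have hunit : ∃ u : Fin d → ℝ, vnorm u = 1 := by
    refine ⟨fun j => if j = (⟨0, hd0⟩ : Fin d) then 1 else 0, ?_⟩
    unfold vnorm
    rw [show (∑ j, (if j = (⟨0, hd0⟩ : Fin d) then (1:ℝ) else 0) ^ 2) = 1 by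
      simp [apply_ite (fun x : ℝ => x ^ 2)]]
    exact Real.sqrt_one
  -- lower bound for sigmaMin in terms of any orthogonal Q
  have hσQ : ∀ Q : Matrix (Fin d) (Fin d) ℝ, IsOrth Q →
      (n : ℝ) - frob (S - ZStack n d * Q) ^ 2 / 2 ≤ σ := by
    intro Q hQ
    apply le_csInf
    · obtain ⟨u, hu⟩ := hunit
      exact ⟨vnorm (Matrix.vecMul u ((ZStack n d)ᵀ * S)), u, hu, rfl⟩
    · rintro r ⟨u, hu, rfl⟩
      exact key_ineq S hS Q hQ u hu
  by_cases hcase : (n : ℝ) ≤ σ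
  · have hx : (0:ℝ) ≤ ε ^ 2 * (d:ℝ) / 2 := by positivity
    nlinarith
  · push_neg at hcase
    have h2 : Real.sqrt (2 * ((n : ℝ) - σ)) ≤ dF S (ZStack n d) := by
      apply le_csInf
      · exact ⟨frob (S - ZStack n d * 1), 1, isOrth_one, rfl⟩
      · rintro r ⟨Q, hQ, rfl⟩
        have h3 := hσQ Q hQ
        have h4 : 2 * ((n : ℝ) - σ) ≤ frob (S - ZStack n d * Q) ^ 2 := by linarith
        calc Real.sqrt (2 * ((n : ℝ) - σ)) ≤ Real.sqrt (frob (S - ZStack n d * Q) ^ 2) :=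
              Real.sqrt_le_sqrt h4
          _ = frob (S - ZStack n d * Q) := Real.sqrt_sq (frob_nonneg' _)
    have h5 : Real.sqrt (2 * ((n : ℝ) - σ)) ≤ ε * Real.sqrt ((n : ℝ) * d) := h2.trans hdist
    have h6 : 2 * ((n : ℝ) - σ) ≤ (ε * Real.sqrt ((n : ℝ) * d)) ^ 2 := by
      have h7 : 0 ≤ 2 * ((n : ℝ) - σ) := by linarith
      calc 2 * ((n : ℝ) - σ) = Real.sqrt (2 * ((n : ℝ) - σ)) ^ 2 := (Real.sq_sqrt h7).symm
        _ ≤ (ε * Real.sqrt ((n : ℝ) * d)) ^ 2 :=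
            pow_le_pow_left₀ (Real.sqrt_nonneg _) h5 2
    have h8 : (ε * Real.sqrt ((n : ℝ) * d)) ^ 2 = ε ^ 2 * ((n : ℝ) * d) := by
      rw [mul_pow, Real.sq_sqrt (by positivity)]
    rw [h8] at h6
    nlinarith

end GOPP
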